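/- Let φ be an N-function of class C¹ on [0,∞) and C² on (0,∞) with φ'(t) ∼ t φ''(t) uniformly in t > 0. For a ≥ 0 define the shifted function φ_a by φ_a'(t) := φ'(a+t)·t/(a+t). Then for all a ≥ 0: φ_a(t) ∼ φ(t) for t ≥ a, and φ_a(t) ∼ φ''(a) t² for 0 ≤ t ≤ a (when a > 0), with constants depending only on the characteristics of φ. -/

import Mathlib

open Set Filter MeasureTheory

def IsNFunction (ψ ψ' : ℝ → ℝ) : Prop :=
  ψ 0 = 0 ∧
  (∀ t ∈ Set.Ici (0:ℝ), HasDerivWithinAt ψ (ψ' t) (Set.Ici 0) t) ∧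
  MonotoneOn ψ' (Set.Ici 0) ∧
  (∀ t ∈ Set.Ici (0:ℝ), ContinuousWithinAt ψ' (Set.Ici t) t) ∧
  ψ' 0 = 0 ∧
  (∀ t > (0:ℝ), 0 < ψ' t) ∧
  Filter.Tendsto ψ' Filter.atTop Filter.atTop

/-- The shifted N-function `φ_a(t) = ∫₀ᵗ φ'(a+s) · s/(a+s) ds`. -/
noncomputable def shiftFn (φ' : ℝ → ℝ) (a t : ℝ) : ℝ :=
  ∫ s in (0:ℝ)..t, φ' (a + s) * s / (a + s)


/-- monotonicity of `s ↦ s/(a+s)` for `a ≥ 0`. -/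
lemma ratio_mono {a : ℝ} (ha : 0 ≤ a) : MonotoneOn (fun s => s / (a + s)) (Ici (0:ℝ)) := by
  intro x hx y hy hxy
  simp only [mem_Ici] at hx hy
  rcases eq_or_lt_of_le hx with h0 | h0
  · simp only [← h0]
    rw [zero_div]
    positivity
  · have hax : 0 < a + x := by linarith
    have hay : 0 < a + y := by linarith
    rw [div_le_div_iff₀ hax hay]
    nlinarith

/-- convexity bounds: `φ'(u)(v-u) ≤ φ(v)-φ(u) ≤ φ'(v)(v-u)` -/
lemma conv_bounds {φ φ' : ℝ → ℝ}
    (hφ : ∀ t ∈ Ici (0:ℝ), HasDerivWithinAt φ (φ' t) (Ici 0) t)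
    (hmono : MonotoneOn φ' (Ici 0)) {u v : ℝ} (hu : 0 ≤ u) (huv : u ≤ v) :
    φ' u * (v - u) ≤ φ v - φ u ∧ φ v - φ u ≤ φ' v * (v - u) := by
  have hφc : ContinuousOn φ (Ici 0) := fun x hx => (hφ x hx).continuousWithinAt
  have hder : ∀ x ∈ Ioo u v, HasDerivAt φ (φ' x) x := by
    intro x hx
    have hx0 : 0 < x := lt_of_le_of_lt hu hx.1
    exact (hφ x (le_of_lt hx0)).hasDerivAt (Ici_mem_nhds hx0)
  constructor
  · -- lower: h x = φ x - φ' u * x is monotone on [u,v]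
    have hm : MonotoneOn (fun x => φ x - φ' u * x) (Icc u v) := by
      apply monotoneOn_of_deriv_nonneg (convex_Icc u v)
      · exact (hφc.mono (Icc_subset_Ici_self.trans (Ici_subset_Ici.mpr hu))).sub
          (continuous_const.mul continuous_id).continuousOn
      · intro x hx
        rw [interior_Icc] at hx
        exact ((hder x hx).sub ((hasDerivAt_id x).const_mul (φ' u))).differentiableAt.differentiableWithinAt
      · intro x hx
        rw [interior_Icc] at hx
        have hD : HasDerivAt (fun x => φ x - φ' u * x) (φ' x - φ' u * 1) x :=
          (hder x hx).sub (by simpa using (hasDerivAt_id x).const_mul (φ' u))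
        rw [hD.deriv]
        have := hmono (mem_Ici.mpr hu) (mem_Ici.mpr (hu.trans hx.1.le)) hx.1.le
        simp only [mul_one]
        linarith
    have := hm (left_mem_Icc.mpr huv) (right_mem_Icc.mpr huv) huv
    simp only at this
    linarith
  · -- upper: h x = φ' v * x - φ x is monotone on [u,v]
    have hm : MonotoneOn (fun x => φ' v * x - φ x) (Icc u v) := by
      apply monotoneOn_of_deriv_nonneg (convex_Icc u v)
      · exact (continuous_const.mul continuous_id).continuousOn.sub
          (hφc.mono (Icc_subset_Ici_self.trans (Ici_subset_Ici.mpr hu)))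
      · intro x hx
        rw [interior_Icc] at hx
        exact (((hasDerivAt_id x).const_mul (φ' v)).sub (hder x hx)).differentiableAt.differentiableWithinAt
      · intro x hx
        rw [interior_Icc] at hx
        have hD : HasDerivAt (fun x => φ' v * x - φ x) (φ' v * 1 - φ' x) x :=
          HasDerivAt.sub (by simpa using (hasDerivAt_id x).const_mul (φ' v)) (hder x hx)
        rw [hD.deriv]
        have := hmono (mem_Ici.mpr (hu.trans hx.1.le)) (mem_Ici.mpr (hu.trans huv)) hx.2.le
        simp only [mul_one]
        linarith
    have := hm (left_mem_Icc.mpr huv) (right_mem_Icc.mpr huv) huv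
    simp only at this
    linarith

/-- growth lemma: `φ'(2x) ≤ 2^c₂ φ'(x)` when `t φ''(t) ≤ c₂ φ'(t)`. -/
lemma doubling {φ' φ'' : ℝ → ℝ} {c₂ : ℝ} (hc₂ : 0 < c₂)
    (hd : ∀ t > (0:ℝ), HasDerivAt φ' (φ'' t) t)
    (hub : ∀ t > (0:ℝ), t * φ'' t ≤ c₂ * φ' t) :
    ∀ x > (0:ℝ), φ' (2 * x) ≤ 2 ^ c₂ * φ' x := by
  have key : AntitoneOn (fun x => φ' x * x ^ (-c₂)) (Ioi (0:ℝ)) := by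
    have hder : ∀ x ∈ Ioi (0:ℝ), HasDerivAt (fun x => φ' x * x ^ (-c₂))
        (φ'' x * x ^ (-c₂) + φ' x * (-c₂ * x ^ (-c₂ - 1))) x := by
      intro x hx
      have hx0 : (0:ℝ) < x := hx
      exact (hd x hx0).mul ((Real.hasDerivAt_rpow_const (Or.inl hx0.ne')))
    apply antitoneOn_of_deriv_nonpos (convex_Ioi 0)
    · intro x hx
      exact (hder x hx).continuousAt.continuousWithinAt
    · rw [interior_Ioi]
      exact fun x hx => (hder x hx).differentiableAt.differentiableWithinAt
    · rw [interior_Ioi]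
      intro x hx
      rw [(hder x hx).deriv]
      have hx0 : (0:ℝ) < x := hx
      have h1 : x ^ (-c₂) = x ^ (-c₂ - 1) * x := by
        rw [← Real.rpow_add_one hx0.ne' (-c₂ - 1)]
        ring_nf
      have h2 : (0:ℝ) < x ^ (-c₂ - 1) := Real.rpow_pos_of_pos hx0 _
      have := hub x hx0
      calc φ'' x * x ^ (-c₂) + φ' x * (-c₂ * x ^ (-c₂ - 1))
          = (x * φ'' x) * x ^ (-c₂ - 1) - c₂ * φ' x * x ^ (-c₂ - 1) := by rw [h1]; ring
        _ ≤ 0 := by nlinarith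
  intro x hx
  have h2x : (0:ℝ) < 2 * x := by linarith
  have := key (mem_Ioi.mpr hx) (mem_Ioi.mpr h2x) (by linarith)
  -- this : φ' (2x) * (2x)^(-c₂) ≤ φ' x * x^(-c₂)
  have hxp : (0:ℝ) < x ^ c₂ := Real.rpow_pos_of_pos hx _
  have h2xp : (0:ℝ) < (2 * x) ^ c₂ := Real.rpow_pos_of_pos h2x _
  simp only at this
  rw [Real.rpow_neg h2x.le, Real.rpow_neg hx.le, ← div_eq_mul_inv, ← div_eq_mul_inv,
    div_le_div_iff₀ h2xp hxp] at this
  have hsplit : (2 * x) ^ c₂ = 2 ^ c₂ * x ^ c₂ := Real.mul_rpow (by norm_num) hx.le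
  rw [hsplit] at this
  rw [← mul_le_mul_iff_of_pos_right hxp]
  ring_nf at this ⊢
  linarith

set_option maxHeartbeats 1000000 in
theorem shifted_equiv (c₁ c₂ : ℝ) (hc₁ : 0 < c₁) (hc₂ : 0 < c₂) :
    ∃ c C : ℝ, 0 < c ∧ 0 < C ∧
      ∀ φ φ' φ'' : ℝ → ℝ, IsNFunction φ φ' →
        (∀ t > (0:ℝ), HasDerivAt φ' (φ'' t) t) →
        (∀ t > (0:ℝ), ContinuousAt φ'' t) →
        (∀ t > (0:ℝ), c₁ * φ' t ≤ t * φ'' t ∧ t * φ'' t ≤ c₂ * φ' t) →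
        ∀ a ≥ (0:ℝ),
          (∀ t, a ≤ t → c * φ t ≤ shiftFn φ' a t ∧ shiftFn φ' a t ≤ C * φ t) ∧
          (0 < a → ∀ t, 0 ≤ t → t ≤ a →
            c * (φ'' a * t ^ 2) ≤ shiftFn φ' a t ∧
              shiftFn φ' a t ≤ C * (φ'' a * t ^ 2)) := by
  set p := (2:ℝ) ^ c₂ with hpdef
  have hp0 : 0 < p := Real.rpow_pos_of_pos two_pos c₂
  refine ⟨min (1/(6*p)) (1/(4*c₂)), max (2*p^2) (p/(2*c₁)), by positivity, ?_, ?_⟩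
  · exact lt_max_of_lt_left (by positivity)
  intro φ φ' φ'' hN hd hcont hcomp a ha
  obtain ⟨hφ0, hφd, hmono, _, hφ'0, hφ'pos, _⟩ := hN
  have hφ'nonneg : ∀ t, 0 ≤ t → 0 ≤ φ' t := by
    intro t ht
    have := hmono (mem_Ici.mpr le_rfl) (mem_Ici.mpr ht) ht
    rwa [hφ'0] at this
  have hφnonneg : ∀ t, 0 ≤ t → 0 ≤ φ t := by
    intro t ht
    have := (conv_bounds hφd hmono le_rfl ht).1
    rw [hφ0, hφ'0] at this
    linarith
  have hdbl : ∀ x > (0:ℝ), φ' (2*x) ≤ p * φ' x :=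
    doubling hc₂ hd (fun t ht => (hcomp t ht).2)
  set f : ℝ → ℝ := fun s => φ' (a + s) * s / (a + s) with hfdef
  have hfnonneg : ∀ s, 0 ≤ s → 0 ≤ f s := by
    intro s hs
    exact div_nonneg (mul_nonneg (hφ'nonneg _ (by linarith)) hs) (by linarith)
  have hfmono : MonotoneOn f (Ici (0:ℝ)) := by
    intro x hx y hy hxy
    simp only [mem_Ici] at hx hy
    simp only [hfdef, mul_div_assoc]
    have hr := ratio_mono ha hx hy hxy
    simp only at hr
    exact mul_le_mul (hmono (by simp; linarith) (by simp; linarith) (by linarith)) hr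
      (div_nonneg hx (by linarith)) (hφ'nonneg _ (by linarith))
  have hint : ∀ u v : ℝ, 0 ≤ u → u ≤ v → IntervalIntegrable f volume u v := by
    intro u v hu huv
    apply MonotoneOn.intervalIntegrable
    apply hfmono.mono
    rw [uIcc_of_le huv]
    exact fun x hx => le_trans hu hx.1
  have hshift : ∀ t, shiftFn φ' a t = ∫ s in (0:ℝ)..t, f s := fun t => rfl
  constructor
  · -- Part 1 : a ≤ t
    intro t hat
    have ht0 : 0 ≤ t := le_trans ha hat
    rcases eq_or_lt_of_le ht0 with h0 | ht0
    · obtain rfl : t = 0 := h0.symm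
      rw [hshift, intervalIntegral.integral_same, hφ0]
      norm_num
    -- t > 0
    have hint_t := hint 0 t le_rfl ht0.le
    -- upper bound
    have hU : shiftFn φ' a t ≤ t * φ' (2*t) := by
      rw [hshift]
      have := intervalIntegral.integral_mono_on ht0.le hint_t (intervalIntegrable_const)
        (g := fun _ => φ' (2*t)) ?_
      · simpa using this
      intro s hs
      have h1 : f s ≤ φ' (a+s) := by
        rcases eq_or_lt_of_le (show (0:ℝ) ≤ a + s by linarith [hs.1]) with h | h
        · simp only [hfdef, ← h, div_zero]
          exact hφ'nonneg _ (by linarith [hs.1])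
        · simp only [hfdef, mul_div_assoc]
          exact mul_le_of_le_one_right (hφ'nonneg _ h.le)
            (div_le_one_of_le₀ (by linarith [hs.1]) h.le)
      have h2 : φ' (a+s) ≤ φ' (2*t) :=
        hmono (by simp; linarith [hs.1]) (by simp; linarith) (by linarith [hs.2])
      linarith
    have hB : φ' (2*t) ≤ p * φ' t := hdbl t ht0
    have hC : φ' t ≤ p * φ' (t/2) := by
      have := hdbl (t/2) (by linarith)
      rwa [show 2*(t/2) = t by ring] at this
    have hD : (t/2) * φ' (t/2) ≤ φ t := by
      have h1 := (conv_bounds hφd hmono (by linarith : (0:ℝ) ≤ t/2) (by linarith : t/2 ≤ t)).1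
      have h2 := hφnonneg (t/2) (by linarith)
      nlinarith
    have hE : φ t ≤ t * φ' t := by
      have := (conv_bounds hφd hmono le_rfl ht0.le).2
      rw [hφ0] at this
      linarith
    constructor
    · -- lower bound
      have i1 := hint 0 (t/2) le_rfl (by linarith)
      have i2 := hint (t/2) t (by linarith) (by linarith)
      have hsplit : shiftFn φ' a t = (∫ s in (0:ℝ)..(t/2), f s) + ∫ s in (t/2)..t, f s := by
        rw [hshift, intervalIntegral.integral_add_adjacent_intervals i1 i2]
      have h5 : 0 ≤ ∫ s in (0:ℝ)..(t/2), f s :=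
        intervalIntegral.integral_nonneg (by linarith) (fun u hu => hfnonneg u hu.1)
      have h6 : t * φ' (t/2) / 6 ≤ ∫ s in (t/2)..t, f s := by
        have hmon := intervalIntegral.integral_mono_on (by linarith : t/2 ≤ t)
          (intervalIntegrable_const) i2 (f := fun _ => φ' (t/2) / 3) ?_
        · rw [intervalIntegral.integral_const, smul_eq_mul,
            show (t - t/2) * (φ' (t/2) / 3) = t * φ' (t/2) / 6 by ring] at hmon
          exact hmon
        intro s hs
        have hs0 : 0 < s := lt_of_lt_of_le (by linarith) hs.1
        have has : 0 < a + s := by linarith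
        have h7 : φ' (t/2) ≤ φ' (a+s) :=
          hmono (by simp; linarith) (by simp; linarith) (by linarith [hs.1])
        have h8 : (1:ℝ)/3 ≤ s/(a+s) := by
          rw [le_div_iff₀ has]
          have : a ≤ t := hat
          have : t/2 ≤ s := hs.1
          have : s ≤ t := hs.2
          linarith
        calc φ' (t/2) / 3 = φ' (t/2) * (1/3) := by ring
          _ ≤ φ' (a+s) * (s/(a+s)) :=
            mul_le_mul h7 h8 (by norm_num) (hφ'nonneg _ has.le)
          _ = f s := by rw [hfdef]; ring
      -- shiftFn ≥ t * φ'(t/2) / 6 ; and min * φ t ≤ that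
      have hlow : t * φ' (t/2) / 6 ≤ shiftFn φ' a t := by
        rw [hsplit]; linarith
      have hphi : φ t ≤ p * (t * φ' (t/2)) := by nlinarith [hφ'nonneg t ht0.le]
      have hminle : min (1/(6*p)) (1/(4*c₂)) * φ t ≤ (1/(6*p)) * φ t :=
        mul_le_mul_of_nonneg_right (min_le_left _ _) (hφnonneg t ht0.le)
      have hkey : (1/(6*p)) * φ t ≤ t * φ' (t/2) / 6 := by
        rw [div_mul_eq_mul_div, div_le_div_iff₀ (by positivity) (by norm_num)]
        nlinarith
      linarith
    · -- upper bound
      have h1 : shiftFn φ' a t ≤ 2*p^2 * φ t := by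
        have k1 : t * φ' (2*t) ≤ t * (p * φ' t) := by
          nlinarith [mul_le_mul_of_nonneg_left hB ht0.le]
        have k2 : t * (p * φ' t) ≤ t * (p * (p * φ' (t/2))) := by
          nlinarith [mul_le_mul_of_nonneg_left hC (by positivity : (0:ℝ) ≤ t * p)]
        have k3 : t * (p * (p * φ' (t/2))) = 2*p^2 * (t/2 * φ' (t/2)) := by ring
        have k4 : 2*p^2 * (t/2 * φ' (t/2)) ≤ 2*p^2 * φ t :=
          mul_le_mul_of_nonneg_left hD (by positivity)
        linarith
      have h2 : 2*p^2 * φ t ≤ max (2*p^2) (p/(2*c₁)) * φ t :=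
        mul_le_mul_of_nonneg_right (le_max_left _ _) (hφnonneg t ht0.le)
      linarith
  · -- Part 2 : 0 < a, 0 ≤ t ≤ a
    intro ha0 t ht0 hta
    have hcompa := hcomp a ha0
    have hφ'a := hφ'pos a ha0
    have hφ''a : 0 < φ'' a := by nlinarith [hcompa.1, mul_pos hc₁ hφ'a]
    have hint_t := hint 0 t le_rfl ht0
    have hdbla := hdbl a ha0
    constructor
    · -- lower
      have hL : (φ' a / (2*a)) * (t^2/2) ≤ shiftFn φ' a t := by
        rw [hshift]
        have hmon := intervalIntegral.integral_mono_on ht0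
          ((continuous_const.mul continuous_id).intervalIntegrable 0 t) hint_t
          (f := fun s => (φ' a / (2*a)) * s) ?_
        · rw [intervalIntegral.integral_const_mul, integral_id] at hmon
          calc (φ' a / (2*a)) * (t^2/2) = φ' a / (2*a) * ((t^2 - 0^2)/2) := by ring
            _ ≤ _ := hmon
        intro s hs
        have has : 0 < a + s := by linarith [hs.1]
        have h7 : φ' a ≤ φ' (a+s) :=
          hmono (by simp; linarith) (by simp; linarith [hs.1]) (by linarith [hs.1])
        have h8 : s / (2*a) ≤ s / (a+s) := by
          rw [div_le_div_iff₀ (by linarith) has]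
          nlinarith [hs.1, hs.2]
        calc (φ' a / (2*a)) * s = φ' a * (s / (2*a)) := by ring
          _ ≤ φ' (a+s) * (s/(a+s)) :=
            mul_le_mul h7 h8 (div_nonneg hs.1 (by linarith)) (hφ'nonneg _ has.le)
          _ = f s := by rw [hfdef]; ring
      have hmin : min (1/(6*p)) (1/(4*c₂)) * (φ'' a * t^2) ≤ (1/(4*c₂)) * (φ'' a * t^2) :=
        mul_le_mul_of_nonneg_right (min_le_right _ _) (mul_nonneg hφ''a.le (sq_nonneg t))
      have hkey : (1/(4*c₂)) * (φ'' a * t^2) ≤ (φ' a / (2*a)) * (t^2/2) := by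
        have e1 : (1/(4*c₂)) * (φ'' a * t^2) = (φ'' a * t^2) / (4*c₂) := by ring
        have e2 : (φ' a / (2*a)) * (t^2/2) = (φ' a * t^2) / (4*a) := by ring
        rw [e1, e2, div_le_div_iff₀ (by positivity) (by positivity)]
        nlinarith [mul_nonneg (sub_nonneg.mpr hcompa.2) (sq_nonneg t)]
      linarith
    · -- upper
      have hU : shiftFn φ' a t ≤ (p * φ' a / a) * (t^2/2) := by
        rw [hshift]
        have hmon := intervalIntegral.integral_mono_on ht0 hint_t
          ((continuous_const.mul continuous_id).intervalIntegrable 0 t)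
          (g := fun s => (p * φ' a / a) * s) ?_
        · rw [intervalIntegral.integral_const_mul, integral_id] at hmon
          calc shiftFn φ' a t = ∫ s in (0:ℝ)..t, f s := hshift t
            _ ≤ p * φ' a / a * ((t^2 - 0^2)/2) := hmon
            _ = (p * φ' a / a) * (t^2/2) := by ring
        intro s hs
        have has : 0 < a + s := by linarith [hs.1]
        have h7 : φ' (a+s) ≤ p * φ' a := by
          have := hmono (show a+s ∈ Ici (0:ℝ) by simp; linarith [hs.1])
            (show 2*a ∈ Ici (0:ℝ) by simp; linarith) (by linarith [hs.2])
          linarith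
        have h8 : s / (a+s) ≤ s / a := by
          rw [div_le_div_iff₀ has ha0]
          nlinarith [hs.1]
        calc f s = φ' (a+s) * (s/(a+s)) := by rw [hfdef]; ring
          _ ≤ (p * φ' a) * (s/a) :=
            mul_le_mul h7 h8 (div_nonneg hs.1 has.le) (mul_nonneg hp0.le hφ'a.le)
          _ = (p * φ' a / a) * s := by ring
      have hkey : (p * φ' a / a) * (t^2/2) ≤ (p/(2*c₁)) * (φ'' a * t^2) := by
        have e1 : (p * φ' a / a) * (t^2/2) = (p * φ' a * t^2) / (2*a) := by ring
        have e2 : (p/(2*c₁)) * (φ'' a * t^2) = (p * (φ'' a * t^2)) / (2*c₁) := by ring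
        rw [e1, e2, div_le_div_iff₀ (by positivity) (by positivity)]
        nlinarith [mul_nonneg (mul_nonneg hp0.le (sub_nonneg.mpr hcompa.1)) (sq_nonneg t)]
      have hmax : (p/(2*c₁)) * (φ'' a * t^2) ≤ max (2*p^2) (p/(2*c₁)) * (φ'' a * t^2) :=
        mul_le_mul_of_nonneg_right (le_max_right _ _) (mul_nonneg hφ''a.le (sq_nonneg t))
      linarith
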